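/- Let G = (V, E) be a finite strongly connected directed graph with at least two vertices, let α ∈ [0, 1), and let φ : V → ℝ be a positive left eigenvector of the probability matrix M_α with φ M_α = φ. Then for every function f : V → ℝ and every vertex v_i ∈ V, Γ₂(f, f)(v_i) = (1/2)(Δf(v_i))² − Γ(f, f)(v_i) + H(f)(v_i), where H(f)(v_i) = (1/(16φ(v_i))) [ Σ_{v_j ∈ N^out(v_i)} (w_{ij}/φ(v_j)) Σ_{v_a ∈ N^out(v_j)} w_{ja}(f(v_a) − 2f(v_j) + f(v_i))² + Σ_{v_j ∈ N^out(v_i)} (w_{ij}/φ(v_j)) Σ_{v_b ∈ N^in(v_j)} w_{bj}(f(v_b) − 2f(v_j) + f(v_i))² + Σ_{v_k ∈ N^in(v_i)} (w_{ki}/φ(v_k)) Σ_{v_c ∈ N^out(v_k)} w_{kc}(f(v_c) − 2f(v_k) + f(v_i))² + Σ_{v_k ∈ N^in(v_i)} (w_{ki}/φ(v_k)) Σ_{v_d ∈ N^in(v_k)} w_{dk}(f(v_d) − 2f(v_k) + f(v_i))² ]. -/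

import Mathlib

open Finset

noncomputable section

/-- Out-neighborhood `S^out(x) = {y | (x,y) ∈ E}`. -/
def Sout {V : Type*} [Fintype V] (E : V → V → Prop) [DecidableRel E] (x : V) : Finset V :=
  Finset.univ.filter (fun y => E x y)

/-- In-neighborhood `S^in(x) = {z | (z,x) ∈ E}`. -/
def Sin {V : Type*} [Fintype V] (E : V → V → Prop) [DecidableRel E] (x : V) : Finset V :=
  Finset.univ.filter (fun z => E z x)

/-- `N^out(x) = {x} ∪ S^out(x)`. -/
def Nout {V : Type*} [Fintype V] [DecidableEq V] (E : V → V → Prop) [DecidableRel E]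
    (x : V) : Finset V :=
  insert x (Sout E x)

/-- `N^in(x) = {x} ∪ S^in(x)`. -/
def Nin {V : Type*} [Fintype V] [DecidableEq V] (E : V → V → Prop) [DecidableRel E]
    (x : V) : Finset V :=
  insert x (Sin E x)

/-- Degree `d_x = |S^out(x)|`. -/
def deg {V : Type*} [Fintype V] (E : V → V → Prop) [DecidableRel E] (x : V) : ℕ :=
  (Sout E x).card

/-- The probability matrix `M_α`. -/
def Mat {V : Type*} [Fintype V] [DecidableEq V] (E : V → V → Prop) [DecidableRel E]
    (α : ℝ) (x y : V) : ℝ :=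
  if y = x then α else if E x y then (1 - α) / (deg E x : ℝ) else 0

/-- The weights `w_{ij} = φ(v_i) (M_α)_{i,j}`. -/
def wt {V : Type*} [Fintype V] [DecidableEq V] (E : V → V → Prop) [DecidableRel E]
    (α : ℝ) (φ : V → ℝ) (x y : V) : ℝ :=
  φ x * Mat E α x y

/-- The Laplacian on directed graphs. -/
def lap {V : Type*} [Fintype V] [DecidableEq V] (E : V → V → Prop) [DecidableRel E]
    (α : ℝ) (φ : V → ℝ) (f : V → ℝ) (x : V) : ℝ :=
  (1 / (2 * φ x)) *
    ((∑ y ∈ Sout E x, wt E α φ x y * (f y - f x)) +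
     (∑ z ∈ Sin E x, wt E α φ z x * (f z - f x)))

/-- `Γ(f,g) = (1/2)(Δ(fg) - fΔg - gΔf)`. -/
def Gam {V : Type*} [Fintype V] [DecidableEq V] (E : V → V → Prop) [DecidableRel E]
    (α : ℝ) (φ : V → ℝ) (f g : V → ℝ) (x : V) : ℝ :=
  (1 / 2) * (lap E α φ (f * g) x - f x * lap E α φ g x - g x * lap E α φ f x)

/-- `Γ₂(f,g) = (1/2)(ΔΓ(f,g) - Γ(f,Δg) - Γ(Δf,g))`. -/
def Gam2 {V : Type*} [Fintype V] [DecidableEq V] (E : V → V → Prop) [DecidableRel E]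
    (α : ℝ) (φ : V → ℝ) (f g : V → ℝ) (x : V) : ℝ :=
  (1 / 2) * (lap E α φ (Gam E α φ f g) x - Gam E α φ f (lap E α φ g) x -
    Gam E α φ (lap E α φ f) g x)

/-- `C(v_i)`: the minimum of `w_{ij}/φ(v_j)` over `v_j ∈ S^out(v_i)` and
`w_{ki}/φ(v_k)` over `v_k ∈ S^in(v_i)`. -/
def Cmin {V : Type*} [Fintype V] [DecidableEq V] (E : V → V → Prop) [DecidableRel E]
    (α : ℝ) (φ : V → ℝ) (x : V) : ℝ :=
  sInf ((fun j => wt E α φ x j / φ j) '' (Sout E x : Set V) ∪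
        (fun k => wt E α φ k x / φ k) '' (Sin E x : Set V))

/-- The quantity `H(f)(v_i)`. -/
def Hfun {V : Type*} [Fintype V] [DecidableEq V] (E : V → V → Prop) [DecidableRel E]
    (α : ℝ) (φ : V → ℝ) (f : V → ℝ) (vi : V) : ℝ :=
  (1 / (16 * φ vi)) *
    ((∑ vj ∈ Nout E vi, (wt E α φ vi vj / φ vj) *
        ∑ va ∈ Nout E vj, wt E α φ vj va * (f va - 2 * f vj + f vi) ^ 2) +
     (∑ vj ∈ Nout E vi, (wt E α φ vi vj / φ vj) *
        ∑ vb ∈ Nin E vj, wt E α φ vb vj * (f vb - 2 * f vj + f vi) ^ 2) +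
     (∑ vk ∈ Nin E vi, (wt E α φ vk vi / φ vk) *
        ∑ vc ∈ Nout E vk, wt E α φ vk vc * (f vc - 2 * f vk + f vi) ^ 2) +
     (∑ vk ∈ Nin E vi, (wt E α φ vk vi / φ vk) *
        ∑ vd ∈ Nin E vk, wt E α φ vd vk * (f vd - 2 * f vk + f vi) ^ 2))

section AuxLemmas

variable {V : Type*} [Fintype V] [DecidableEq V] (E : V → V → Prop) [DecidableRel E]
  (α : ℝ) (φ : V → ℝ)

/-- Symmetrized weight. -/
def AAw (x y : V) : ℝ := wt E α φ x y + wt E α φ y x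

lemma wt_of_not_rel {x y : V} (hne : y ≠ x) (h : ¬ E x y) : wt E α φ x y = 0 := by
  simp [wt, Mat, hne, h]

lemma deg_pos (hcard : 1 < Fintype.card V)
    (hconn : ∀ x y : V, x ≠ y → Relation.TransGen E x y) (x : V) : 0 < deg E x := by
  obtain ⟨y, hy⟩ := Fintype.exists_ne_of_one_lt_card hcard x
  have h := hconn x y hy.symm
  clear hy
  have hex : ∃ z, E x z := by
    induction h with
    | single h => exact ⟨_, h⟩
    | tail _ _ ih => exact ih
  obtain ⟨z, hz⟩ := hex
  exact Finset.card_pos.mpr ⟨z, by simp [Sout, hz]⟩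

lemma Mat_row_sum (x : V) :
    ∑ y : V, Mat E α x y = α + (((Sout E x).erase x).card : ℝ) * ((1 - α) / (deg E x : ℝ)) := by
  have h : ∀ y : V, Mat E α x y =
      (if y = x then α else 0) + (if y ∈ (Sout E x).erase x then (1 - α) / (deg E x : ℝ) else 0) := by
    intro y
    by_cases h1 : y = x
    · simp [Mat, h1]
    · by_cases h2 : E x y <;> simp [Mat, h1, h2, Sout, Finset.mem_erase]
  rw [Finset.sum_congr rfl (fun y _ => h y), Finset.sum_add_distrib]
  congr 1
  · simp
  · rw [Finset.sum_ite_mem, Finset.univ_inter, Finset.sum_const, nsmul_eq_mul]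

lemma no_loop (hcard : 1 < Fintype.card V)
    (hconn : ∀ x y : V, x ≠ y → Relation.TransGen E x y)
    (hα1 : α < 1) (hφ : ∀ v : V, 0 < φ v)
    (heig : ∀ y : V, ∑ x : V, φ x * Mat E α x y = φ y) (x : V) : ¬ E x x := by
  intro hxx
  have htot : ∑ z : V, φ z * (∑ y : V, Mat E α z y) = ∑ z : V, φ z := by
    calc ∑ z : V, φ z * (∑ y : V, Mat E α z y) = ∑ z : V, ∑ y : V, φ z * Mat E α z y :=
          Finset.sum_congr rfl fun z _ => Finset.mul_sum _ _ _
      _ = ∑ y : V, ∑ z : V, φ z * Mat E α z y := Finset.sum_comm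
      _ = ∑ z : V, φ z := Finset.sum_congr rfl fun y _ => heig y
  have hlt : ∑ z : V, φ z * (∑ y : V, Mat E α z y) < ∑ z : V, φ z := by
    apply Finset.sum_lt_sum
    · intro i _
      rw [Mat_row_sum]
      have hdi : (0 : ℝ) < (deg E i : ℝ) := by
        exact_mod_cast deg_pos E hcard hconn i
      have hc : (((Sout E i).erase i).card : ℝ) ≤ (deg E i : ℝ) := by
        exact_mod_cast Finset.card_erase_le
      have h1 : (((Sout E i).erase i).card : ℝ) * ((1 - α) / (deg E i : ℝ)) ≤
          (deg E i : ℝ) * ((1 - α) / (deg E i : ℝ)) := by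
        apply mul_le_mul_of_nonneg_right hc
        exact div_nonneg (by linarith) hdi.le
      have h2 : (deg E i : ℝ) * ((1 - α) / (deg E i : ℝ)) = 1 - α := by
        field_simp
      nlinarith [hφ i]
    · refine ⟨x, Finset.mem_univ x, ?_⟩
      rw [Mat_row_sum]
      have hd1 : 1 ≤ deg E x := deg_pos E hcard hconn x
      have hdi : (0 : ℝ) < (deg E x : ℝ) := by exact_mod_cast hd1
      have hmem : x ∈ Sout E x := by simp [Sout, hxx]
      have hc : (((Sout E x).erase x).card : ℝ) = (deg E x : ℝ) - 1 := by
        have hd1' : 1 ≤ #(Sout E x) := hd1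
        unfold deg
        rw [Finset.card_erase_of_mem hmem, Nat.cast_sub hd1']
        norm_num
      rw [hc]
      have h2 : (deg E x : ℝ) * ((1 - α) / (deg E x : ℝ)) = 1 - α := by field_simp
      have h3 : (0:ℝ) < (1 - α) / (deg E x : ℝ) := div_pos (by linarith) hdi
      nlinarith [hφ x]
  exact absurd htot (ne_of_lt hlt)

lemma row_sum_wt {x : V} (hdx : 0 < deg E x) (hnl : ¬ E x x) :
    ∑ y : V, wt E α φ x y = φ x := by
  have h1 : ∑ y : V, wt E α φ x y = φ x * ∑ y : V, Mat E α x y := by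
    rw [Finset.mul_sum]; rfl
  have hx : x ∉ Sout E x := by simp [Sout, hnl]
  have hdi : (0 : ℝ) < (deg E x : ℝ) := by exact_mod_cast hdx
  rw [h1, Mat_row_sum, Finset.erase_eq_of_notMem hx]
  have h2 : ((Sout E x).card : ℝ) * ((1 - α) / (deg E x : ℝ)) = 1 - α := by
    show ((deg E x : ℕ) : ℝ) * ((1 - α) / (deg E x : ℝ)) = 1 - α
    field_simp
  rw [h2]; ring

lemma lap_univ (f : V → ℝ) (x : V) :
    lap E α φ f x = 1 / (2 * φ x) * ∑ y : V, AAw E α φ x y * (f y - f x) := by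
  unfold lap
  congr 1
  have h1 : ∑ y ∈ Sout E x, wt E α φ x y * (f y - f x)
      = ∑ y : V, wt E α φ x y * (f y - f x) := by
    apply Finset.sum_subset (Finset.subset_univ _)
    intro y _ hy
    by_cases h : y = x
    · simp [h]
    · rw [wt_of_not_rel E α φ h (by simpa [Sout] using hy), zero_mul]
  have h2 : ∑ z ∈ Sin E x, wt E α φ z x * (f z - f x)
      = ∑ z : V, wt E α φ z x * (f z - f x) := by
    apply Finset.sum_subset (Finset.subset_univ _)
    intro z _ hz
    by_cases h : z = x
    · simp [h]
    · rw [wt_of_not_rel E α φ (Ne.symm h) (by simpa [Sin] using hz), zero_mul]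
  rw [h1, h2, ← Finset.sum_add_distrib]
  exact Finset.sum_congr rfl fun y _ => by unfold AAw; ring

lemma Gam_univ (f g : V → ℝ) (x : V) :
    Gam E α φ f g x = 1 / (4 * φ x) * ∑ y : V, AAw E α φ x y * ((f y - f x) * (g y - g x)) := by
  unfold Gam
  rw [lap_univ, lap_univ, lap_univ]
  have e1 : ∑ y : V, AAw E α φ x y * ((f * g) y - (f * g) x)
      - f x * ∑ y : V, AAw E α φ x y * (g y - g x)
      - g x * ∑ y : V, AAw E α φ x y * (f y - f x)
      = ∑ y : V, AAw E α φ x y * ((f y - f x) * (g y - g x)) := by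
    rw [Finset.mul_sum, Finset.mul_sum, ← Finset.sum_sub_distrib, ← Finset.sum_sub_distrib]
    exact Finset.sum_congr rfl fun y _ => by simp only [Pi.mul_apply]; ring
  rw [← e1]
  ring

lemma Gam_comm (f g : V → ℝ) (x : V) : Gam E α φ f g x = Gam E α φ g f x := by
  unfold Gam
  rw [mul_comm f g]
  ring

lemma sum_AAF (f : V → ℝ) {x : V} (hx : φ x ≠ 0) :
    ∑ y : V, AAw E α φ x y * (f y - f x) = 2 * φ x * lap E α φ f x := by
  rw [lap_univ]
  field_simp

lemma sum_AAF2 (f : V → ℝ) {x : V} (hx : φ x ≠ 0) :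
    ∑ y : V, AAw E α φ x y * (f y - f x) ^ 2 = 4 * φ x * Gam E α φ f f x := by
  rw [Gam_univ]
  have : ∑ y : V, AAw E α φ x y * ((f y - f x) * (f y - f x))
      = ∑ y : V, AAw E α φ x y * (f y - f x) ^ 2 :=
    Finset.sum_congr rfl fun y _ => by ring
  rw [this]
  field_simp

lemma g_pointwise (hAA : ∀ x : V, ∑ y : V, AAw E α φ x y = 2 * φ x)
    (f : V → ℝ) (x : V) {y : V} (hy : φ y ≠ 0) :
    Gam E α φ f f y = 1 / (4 * φ y) * (∑ z : V, AAw E α φ y z * (f z - 2 * f y + f x) ^ 2)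
      + (f y - f x) * lap E α φ f y - (1 / 2) * (f y - f x) ^ 2 := by
  rw [Gam_univ]
  have h1 : ∑ z : V, AAw E α φ y z * ((f z - f y) * (f z - f y))
      = (∑ z : V, AAw E α φ y z * (f z - 2 * f y + f x) ^ 2)
        + 2 * (f y - f x) * (∑ z : V, AAw E α φ y z * (f z - f y))
        - (f y - f x) ^ 2 * (∑ z : V, AAw E α φ y z) := by
    rw [Finset.mul_sum, Finset.mul_sum, ← Finset.sum_add_distrib, ← Finset.sum_sub_distrib]
    exact Finset.sum_congr rfl fun z _ => by ring
  rw [h1, hAA y, sum_AAF E α φ f hy]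
  field_simp
  ring

lemma H_univ (f : V → ℝ) (x : V) :
    Hfun E α φ f x = 1 / (16 * φ x) *
      ∑ y : V, AAw E α φ x y / φ y * ∑ z : V, AAw E α φ y z * (f z - 2 * f y + f x) ^ 2 := by
  unfold Hfun
  have hio : ∀ y : V, ∑ a ∈ Nout E y, wt E α φ y a * (f a - 2 * f y + f x) ^ 2
      = ∑ a : V, wt E α φ y a * (f a - 2 * f y + f x) ^ 2 := by
    intro y
    apply Finset.sum_subset (Finset.subset_univ _)
    intro a _ ha
    rw [wt_of_not_rel E α φ (fun h => ha (by simp [Nout, h]))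
      (fun h => ha (by simp [Nout, Sout, h])), zero_mul]
  have hii : ∀ y : V, ∑ b ∈ Nin E y, wt E α φ b y * (f b - 2 * f y + f x) ^ 2
      = ∑ b : V, wt E α φ b y * (f b - 2 * f y + f x) ^ 2 := by
    intro y
    apply Finset.sum_subset (Finset.subset_univ _)
    intro b _ hb
    rw [wt_of_not_rel E α φ (fun h => hb (by simp [Nin, h]))
      (fun h => hb (by simp [Nin, Sin, h])), zero_mul]
  have ho1 : ∑ vj ∈ Nout E x, wt E α φ x vj / φ vj *
        ∑ va ∈ Nout E vj, wt E α φ vj va * (f va - 2 * f vj + f x) ^ 2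
      = ∑ vj : V, wt E α φ x vj / φ vj *
        ∑ va : V, wt E α φ vj va * (f va - 2 * f vj + f x) ^ 2 := by
    rw [Finset.sum_congr rfl fun vj _ => by rw [hio vj]]
    apply Finset.sum_subset (Finset.subset_univ _)
    intro vj _ hvj
    rw [wt_of_not_rel E α φ (fun h => hvj (by simp [Nout, h]))
      (fun h => hvj (by simp [Nout, Sout, h]))]
    simp
  have ho2 : ∑ vj ∈ Nout E x, wt E α φ x vj / φ vj *
        ∑ vb ∈ Nin E vj, wt E α φ vb vj * (f vb - 2 * f vj + f x) ^ 2
      = ∑ vj : V, wt E α φ x vj / φ vj *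
        ∑ vb : V, wt E α φ vb vj * (f vb - 2 * f vj + f x) ^ 2 := by
    rw [Finset.sum_congr rfl fun vj _ => by rw [hii vj]]
    apply Finset.sum_subset (Finset.subset_univ _)
    intro vj _ hvj
    rw [wt_of_not_rel E α φ (fun h => hvj (by simp [Nout, h]))
      (fun h => hvj (by simp [Nout, Sout, h]))]
    simp
  have ho3 : ∑ vk ∈ Nin E x, wt E α φ vk x / φ vk *
        ∑ vc ∈ Nout E vk, wt E α φ vk vc * (f vc - 2 * f vk + f x) ^ 2
      = ∑ vk : V, wt E α φ vk x / φ vk *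
        ∑ vc : V, wt E α φ vk vc * (f vc - 2 * f vk + f x) ^ 2 := by
    rw [Finset.sum_congr rfl fun vk _ => by rw [hio vk]]
    apply Finset.sum_subset (Finset.subset_univ _)
    intro vk _ hvk
    rw [wt_of_not_rel E α φ (fun h => hvk (by simp [Nin, h]))
      (fun h => hvk (by simp [Nin, Sin, h]))]
    simp
  have ho4 : ∑ vk ∈ Nin E x, wt E α φ vk x / φ vk *
        ∑ vd ∈ Nin E vk, wt E α φ vd vk * (f vd - 2 * f vk + f x) ^ 2
      = ∑ vk : V, wt E α φ vk x / φ vk *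
        ∑ vd : V, wt E α φ vd vk * (f vd - 2 * f vk + f x) ^ 2 := by
    rw [Finset.sum_congr rfl fun vk _ => by rw [hii vk]]
    apply Finset.sum_subset (Finset.subset_univ _)
    intro vk _ hvk
    rw [wt_of_not_rel E α φ (fun h => hvk (by simp [Nin, h]))
      (fun h => hvk (by simp [Nin, Sin, h]))]
    simp
  rw [ho1, ho2, ho3, ho4]
  congr 1
  rw [← Finset.sum_add_distrib, ← Finset.sum_add_distrib, ← Finset.sum_add_distrib]
  apply Finset.sum_congr rfl
  intro y _
  have hAA : ∑ z : V, AAw E α φ y z * (f z - 2 * f y + f x) ^ 2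
      = (∑ z : V, wt E α φ y z * (f z - 2 * f y + f x) ^ 2)
        + ∑ z : V, wt E α φ z y * (f z - 2 * f y + f x) ^ 2 := by
    rw [← Finset.sum_add_distrib]
    exact Finset.sum_congr rfl fun z _ => by unfold AAw; ring
  rw [hAA]
  unfold AAw
  ring

end AuxLemmas

theorem gamma2_decomposition {V : Type*} [Fintype V] [DecidableEq V] (E : V → V → Prop) [DecidableRel E]
    (α : ℝ) (φ : V → ℝ)
    (hcard : 1 < Fintype.card V)
    (hconn : ∀ x y : V, x ≠ y → Relation.TransGen E x y)
    (hα0 : 0 ≤ α) (hα1 : α < 1)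
    (hφ : ∀ v : V, 0 < φ v)
    (heig : ∀ y : V, ∑ x : V, φ x * Mat E α x y = φ y) :
    ∀ (f : V → ℝ) (vi : V),
      Gam2 E α φ f f vi =
        (1 / 2) * (lap E α φ f vi) ^ 2 - Gam E α φ f f vi + Hfun E α φ f vi := by
  intro f vi
  have hNE : ∀ v : V, φ v ≠ 0 := fun v => (hφ v).ne'
  have hnl : ∀ x : V, ¬ E x x := no_loop E α φ hcard hconn hα1 hφ heig
  have hrow : ∀ x : V, ∑ y : V, wt E α φ x y = φ x :=
    fun x => row_sum_wt E α φ (deg_pos E hcard hconn x) (hnl x)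
  have hcol : ∀ x : V, ∑ y : V, wt E α φ y x = φ x := fun x => by
    simpa [wt] using heig x
  have hAA : ∀ x : V, ∑ y : V, AAw E α φ x y = 2 * φ x := by
    intro x
    unfold AAw
    rw [Finset.sum_add_distrib, hrow x, hcol x]
    ring
  have hexp : ∑ y : V, AAw E α φ vi y * (Gam E α φ f f y - Gam E α φ f f vi)
      = (∑ y : V, AAw E α φ vi y *
          (1 / (4 * φ y) * ∑ z : V, AAw E α φ y z * (f z - 2 * f y + f vi) ^ 2))
        + (∑ y : V, AAw E α φ vi y * ((f y - f vi) * lap E α φ f y))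
        - 1 / 2 * (∑ y : V, AAw E α φ vi y * (f y - f vi) ^ 2)
        - Gam E α φ f f vi * (2 * φ vi) := by
    calc ∑ y : V, AAw E α φ vi y * (Gam E α φ f f y - Gam E α φ f f vi)
        = ∑ y : V, (AAw E α φ vi y *
              (1 / (4 * φ y) * ∑ z : V, AAw E α φ y z * (f z - 2 * f y + f vi) ^ 2)
            + AAw E α φ vi y * ((f y - f vi) * lap E α φ f y)
            - 1 / 2 * (AAw E α φ vi y * (f y - f vi) ^ 2)
            - Gam E α φ f f vi * AAw E α φ vi y) := by
          refine Finset.sum_congr rfl fun y _ => ?_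
          rw [g_pointwise E α φ hAA f vi (hNE y)]
          ring
      _ = _ := by
          rw [Finset.sum_sub_distrib, Finset.sum_sub_distrib, Finset.sum_add_distrib,
            ← Finset.mul_sum, ← Finset.mul_sum, hAA vi]
  have hQ : ∑ y : V, AAw E α φ vi y *
        (1 / (4 * φ y) * ∑ z : V, AAw E α φ y z * (f z - 2 * f y + f vi) ^ 2)
      = 4 * φ vi * Hfun E α φ f vi := by
    have key : ∑ y : V, AAw E α φ vi y *
          (1 / (4 * φ y) * ∑ z : V, AAw E α φ y z * (f z - 2 * f y + f vi) ^ 2)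
        = 1 / 4 * ∑ y : V, AAw E α φ vi y / φ y *
            ∑ z : V, AAw E α φ y z * (f z - 2 * f y + f vi) ^ 2 := by
      rw [Finset.mul_sum]
      exact Finset.sum_congr rfl fun y _ => by ring
    rw [key, H_univ E α φ f vi]
    field_simp [hNE vi]
    ring
  have hF2 : ∑ y : V, AAw E α φ vi y * (f y - f vi) ^ 2 = 4 * φ vi * Gam E α φ f f vi :=
    sum_AAF2 E α φ f (hNE vi)
  have hGfu : Gam E α φ f (lap E α φ f) vi
      = 1 / (4 * φ vi) * ((∑ y : V, AAw E α φ vi y * ((f y - f vi) * lap E α φ f y))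
          - 2 * φ vi * lap E α φ f vi * lap E α φ f vi) := by
    rw [Gam_univ]
    congr 1
    calc ∑ y : V, AAw E α φ vi y * ((f y - f vi) * (lap E α φ f y - lap E α φ f vi))
        = ∑ y : V, (AAw E α φ vi y * ((f y - f vi) * lap E α φ f y)
            - lap E α φ f vi * (AAw E α φ vi y * (f y - f vi))) :=
          Finset.sum_congr rfl fun y _ => by ring
      _ = _ := by
          rw [Finset.sum_sub_distrib, ← Finset.mul_sum, sum_AAF E α φ f (hNE vi)]
          ring
  set S := ∑ y : V, AAw E α φ vi y * ((f y - f vi) * lap E α φ f y) with hSdef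
  unfold Gam2
  rw [Gam_comm E α φ (lap E α φ f) f vi, lap_univ E α φ (Gam E α φ f f) vi, hexp, hQ, hF2, hGfu]
  field_simp [hNE vi]
  have hcancel : φ vi ^ 3 * (φ vi)⁻¹ ^ 3 = 1 := by
    rw [← mul_pow, mul_inv_cancel₀ (hNE vi), one_pow]
  ring
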